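/- Let θ be a nonconstant inner function and w ∈ D a point with w ≠ θ(z) for the Frostman shift to be nonconstant; define φ := (θ − w)/(1 − \bar{w}θ). Then φ is an inner function and, for every 1 ≤ p ≤ ∞, K^p_θ = (1 − \bar{w}θ)·K^p_φ := { (1 − \bar{w}θ)·h : h ∈ K^p_φ }. -/

import Mathlib

open MeasureTheory Complex Set Metric ENNReal

noncomputable section

/-- Normalized Lebesgue (arclength) measure `m` on the unit circle `T`, as a measure on `ℂ`. -/
def circleMeasure : Measure ℂ :=
  (ENNReal.ofReal (2 * Real.pi))⁻¹ •
    Measure.map (fun t : ℝ => Complex.exp (t * Complex.I)) (volume.restrict (Ioc 0 (2 * Real.pi)))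

/-- The open unit disk `D`. -/
def unitDisk : Set ℂ := ball (0 : ℂ) 1

/-- `g` is, `m`-a.e. on the circle, the (radial) boundary-value function of `f`. -/
def IsBoundaryValue (f g : ℂ → ℂ) : Prop :=
  ∀ᵐ ζ ∂circleMeasure,
    Filter.Tendsto (fun r : ℝ => f (((r : ℂ)) * ζ)) (nhdsWithin 1 (Iio 1)) (nhds (g ζ))

/-- The Hardy norm `‖f‖_p`; for `p = ∞` it is the sup norm over the disk. -/
def hNorm (p : ℝ≥0∞) (f : ℂ → ℂ) : ℝ≥0∞ :=
  if p = ⊤ then ⨆ z : unitDisk, (‖f (z : ℂ)‖₊ : ℝ≥0∞)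
  else ⨆ r : Ioo (0 : ℝ) 1,
    (∫⁻ ζ, (‖f ((((r : ℝ) : ℂ)) * ζ)‖₊ : ℝ≥0∞) ^ p.toReal ∂circleMeasure) ^ (1 / p.toReal)

/-- Membership in the Hardy space `H^p` (with `f` identified with its boundary values,
i.e. the values of `f` on the circle are `m`-a.e. its radial limits from the disk). -/
def MemHp (p : ℝ≥0∞) (f : ℂ → ℂ) : Prop :=
  DifferentiableOn ℂ f unitDisk ∧ hNorm p f < ⊤ ∧ IsBoundaryValue f f

/-- Inner functions: bounded holomorphic with unimodular boundary values. -/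
def IsInner (θ : ℂ → ℂ) : Prop :=
  MemHp ⊤ θ ∧ ∀ᵐ ζ ∂circleMeasure, ‖θ ζ‖ = 1

/-- `θ` is nonconstant on the unit disk. -/
def Nonconstant (θ : ℂ → ℂ) : Prop := ¬ ∃ c : ℂ, ∀ z ∈ unitDisk, θ z = c

/-- Membership in the star-invariant subspace `K^p_θ`:  `f ∈ H^p` and the function
`ζ ↦ conj ζ * conj (f ζ) * θ ζ` on the circle coincides `m`-a.e. with (the boundary values of)
an `H^p` function. -/
def MemKp (p : ℝ≥0∞) (θ f : ℂ → ℂ) : Prop :=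
  MemHp p f ∧ ∃ h : ℂ → ℂ, MemHp p h ∧
    ∀ᵐ ζ ∂circleMeasure, h ζ = (starRingEnd ℂ) ζ * (starRingEnd ℂ) (f ζ) * θ ζ

/-- `u ∈ Re H^p`. -/
def MemReHp (p : ℝ≥0∞) (u : ℂ → ℝ) : Prop :=
  ∃ f : ℂ → ℂ, MemHp p f ∧ ∀ᵐ ζ ∂circleMeasure, u ζ = (f ζ).re

/-- `u ∈ Re K^p_θ`. -/
def MemReKp (p : ℝ≥0∞) (θ : ℂ → ℂ) (u : ℂ → ℝ) : Prop :=
  ∃ f : ℂ → ℂ, MemKp p θ f ∧ ∀ᵐ ζ ∂circleMeasure, u ζ = (f ζ).re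

open scoped NNReal

/-! ### Auxiliary lemmas -/

lemma measurable_expMap : Measurable (fun t : ℝ => Complex.exp (t * Complex.I)) := by
  fun_prop

lemma twopi_inv_ne_zero : (ENNReal.ofReal (2 * Real.pi))⁻¹ ≠ 0 := by
  exact ENNReal.inv_ne_zero.2 ENNReal.ofReal_ne_top

lemma ae_smul_iff_aux {α : Type*} [MeasurableSpace α] {c : ℝ≥0∞} (hc : c ≠ 0) {μ : Measure α}
    {p : α → Prop} : (∀ᵐ x ∂c • μ, p x) ↔ ∀ᵐ x ∂μ, p x := by
  simp [ae_iff, hc]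

lemma ae_circle_param {P : ℂ → Prop} (h : ∀ᵐ ζ ∂circleMeasure, P ζ) :
    ∀ᵐ t : ℝ ∂(volume.restrict (Ioc 0 (2 * Real.pi))), P (Complex.exp ((t : ℂ) * Complex.I)) := by
  rw [circleMeasure, ae_smul_iff_aux twopi_inv_ne_zero] at h
  exact ae_of_ae_map measurable_expMap.aemeasurable h

lemma ae_circle_of_forall {P : ℂ → Prop} (hP : MeasurableSet {z : ℂ | P z})
    (h : ∀ t : ℝ, P (Complex.exp ((t : ℂ) * Complex.I))) :
    ∀ᵐ ζ ∂circleMeasure, P ζ := by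
  rw [circleMeasure, ae_smul_iff_aux twopi_inv_ne_zero,
    ae_map_iff measurable_expMap.aemeasurable hP]
  exact Filter.Eventually.of_forall fun t => h t

lemma ae_circle_norm_one : ∀ᵐ ζ ∂circleMeasure, ‖ζ‖ = 1 := by
  refine ae_circle_of_forall ?_ ?_
  · exact (isClosed_eq continuous_norm continuous_const).measurableSet
  · intro t; simp

/-! ### Pointwise facts about `1 - conj w * x` -/

lemma den_lb {w x : ℂ} (hx : ‖x‖ ≤ 1) : 1 - ‖w‖ ≤ ‖1 - (starRingEnd ℂ) w * x‖ := by
  have h1 : ‖(starRingEnd ℂ) w * x‖ ≤ ‖w‖ := by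
    rw [norm_mul, RCLike.norm_conj]
    calc ‖w‖ * ‖x‖ ≤ ‖w‖ * 1 := by
          exact mul_le_mul_of_nonneg_left hx (norm_nonneg w)
      _ = ‖w‖ := mul_one _
  have h2 := norm_sub_norm_le (1 : ℂ) ((starRingEnd ℂ) w * x)
  simp only [norm_one] at h2
  linarith

lemma den_ub {w x : ℂ} (hx : ‖x‖ ≤ 1) : ‖1 - (starRingEnd ℂ) w * x‖ ≤ 1 + ‖w‖ := by
  have h1 : ‖(starRingEnd ℂ) w * x‖ ≤ ‖w‖ := by
    rw [norm_mul, RCLike.norm_conj]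
    calc ‖w‖ * ‖x‖ ≤ ‖w‖ * 1 := mul_le_mul_of_nonneg_left hx (norm_nonneg w)
      _ = ‖w‖ := mul_one _
  have h2 := norm_sub_le (1 : ℂ) ((starRingEnd ℂ) w * x)
  simp only [norm_one] at h2
  linarith

lemma den_ne {w x : ℂ} (hw : ‖w‖ < 1) (hx : ‖x‖ ≤ 1) : 1 - (starRingEnd ℂ) w * x ≠ 0 := by
  intro h
  have := den_lb (w := w) hx
  rw [h, norm_zero] at this
  linarith

/-- On the circle (`x * conj x = 1`) we have `conj (1 - conj w * x) * x = x - w`. -/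
lemma circle_id {w x : ℂ} (hx : x * (starRingEnd ℂ) x = 1) :
    (starRingEnd ℂ) (1 - (starRingEnd ℂ) w * x) * x = x - w := by
  have h1 : (starRingEnd ℂ) (1 - (starRingEnd ℂ) w * x) = 1 - w * (starRingEnd ℂ) x := by
    simp [map_sub, map_mul]
  rw [h1]
  linear_combination (-w) * hx

lemma mul_conj_one_of_norm_one {x : ℂ} (hx : ‖x‖ = 1) : x * (starRingEnd ℂ) x = 1 := by
  rw [Complex.mul_conj]
  norm_cast
  rw [Complex.normSq_eq_norm_sq, hx]
  norm_num

/-! ### The Poisson kernel and the maximum-modulus bound -/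

lemma kernel_identity {a ζ : ℂ} {s : ℝ} (hζ : ‖ζ‖ = s) (ha : ‖a‖ < s) :
    (ζ * Complex.I) * ((ζ - a)⁻¹ + (starRingEnd ℂ) a * (((s:ℂ)^2 - (starRingEnd ℂ) a * ζ)⁻¹)) =
      Complex.I * (((s^2 - (‖a‖)^2) / (‖ζ - a‖)^2 : ℝ) : ℂ) := by
  have h0 : 0 < s := (norm_nonneg a).trans_lt ha
  have hζ0 : ζ ≠ 0 := by
    intro h; rw [h, norm_zero] at hζ; exact h0.ne hζ
  have h1 : ζ - a ≠ 0 := sub_ne_zero.2 (by rintro rfl; exact lt_irrefl _ (hζ ▸ ha))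
  have hcb : (starRingEnd ℂ) ζ - (starRingEnd ℂ) a ≠ 0 := by
    rw [← map_sub, map_ne_zero]; exact h1
  have e1 : ((s:ℂ))^2 = ζ * (starRingEnd ℂ) ζ := by
    rw [Complex.mul_conj, ← Complex.sq_norm, hζ]; push_cast; ring
  have e2 : ((‖a‖ : ℂ))^2 = a * (starRingEnd ℂ) a := by
    rw [Complex.mul_conj, ← Complex.sq_norm]; push_cast; ring
  have e3 : ((‖ζ - a‖ : ℂ))^2 = (ζ - a) * ((starRingEnd ℂ) ζ - (starRingEnd ℂ) a) := by
    rw [← map_sub, Complex.mul_conj, ← Complex.sq_norm]; push_cast; ring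
  have hden : ζ * (starRingEnd ℂ) ζ - (starRingEnd ℂ) a * ζ ≠ 0 := by
    have : ζ * (starRingEnd ℂ) ζ - (starRingEnd ℂ) a * ζ
        = ζ * ((starRingEnd ℂ) ζ - (starRingEnd ℂ) a) := by ring
    rw [this]; exact mul_ne_zero hζ0 hcb
  push_cast
  rw [e1, e2, e3]
  field_simp
  ring
lemma poisson_rep {f : ℂ → ℂ} (hf : DifferentiableOn ℂ f (ball (0:ℂ) 1)) {a : ℂ}
    {s : ℝ} (hs : ‖a‖ < s) (hs1 : s < 1) :
    (2 * Real.pi : ℝ) • f a =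
      ∫ t in (0:ℝ)..(2*Real.pi),
        (((s^2 - (‖a‖)^2) / (‖circleMap 0 s t - a‖)^2 : ℝ)) • f (circleMap 0 s t) := by
  have h0 : 0 < s := (norm_nonneg a).trans_lt hs
  have hsub : closedBall (0:ℂ) s ⊆ ball (0:ℂ) 1 := closedBall_subset_ball hs1
  have hfc : DifferentiableOn ℂ f (closedBall (0:ℂ) s) := hf.mono hsub
  have hd : DiffContOnCl ℂ f (ball (0:ℂ) s) := by
    apply DifferentiableOn.diffContOnCl
    rw [closure_ball (0:ℂ) h0.ne']
    exact hfc
  have hmem : a ∈ ball (0:ℂ) s := by simpa [mem_ball, Complex.dist_eq] using hs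
  have E1 : (∮ z in C(0, s), (z - a)⁻¹ • f z) = (2 * Real.pi * Complex.I : ℂ) • f a :=
    hd.circleIntegral_sub_inv_smul hmem
  -- denominator nonvanishing facts
  have hden2 : ∀ z ∈ closedBall (0:ℂ) s, ((s:ℂ))^2 - (starRingEnd ℂ) a * z ≠ 0 := by
    intro z hz
    have hz' : ‖z‖ ≤ s := by simpa [mem_closedBall, Complex.dist_eq] using hz
    intro h
    have := congrArg norm (sub_eq_zero.1 h)
    simp only [norm_mul, norm_pow, RCLike.norm_conj, Complex.norm_real, Real.norm_eq_abs] at this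
    rw [abs_of_pos h0] at this
    nlinarith [norm_nonneg z, norm_nonneg a,
      mul_le_mul_of_nonneg_left hz' (norm_nonneg a)]
  have E2 : (∮ z in C(0, s), ((starRingEnd ℂ) a * (((s:ℂ)^2 - (starRingEnd ℂ) a * z)⁻¹)) • f z) = 0 := by
    apply circleIntegral_eq_zero_of_differentiable_on_off_countable h0.le countable_empty
    · apply ContinuousOn.fun_smul
      · exact (continuousOn_const.mul ((continuousOn_const.sub
          (continuousOn_const.mul continuousOn_id)).inv₀ hden2))
      · exact hfc.continuousOn
    · intro z hz
      have hz' : z ∈ ball (0:ℂ) s := hz.1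
      refine DifferentiableAt.fun_smul ?_ ?_
      · exact (differentiableAt_const _).mul
          (((differentiableAt_const _).sub ((differentiableAt_const _).mul differentiableAt_id)).inv
            (hden2 z (ball_subset_closedBall hz')))
      · exact hf.differentiableAt (isOpen_ball.mem_nhds (hsub (ball_subset_closedBall hz')))
  have hcm : ∀ t : ℝ, ‖circleMap 0 s t‖ = s := by
    intro t; rw [norm_circleMap_zero, abs_of_pos h0]
  have hmemcb : ∀ t : ℝ, circleMap 0 s t ∈ closedBall (0:ℂ) s := by
    intro t; simp [mem_closedBall, Complex.dist_eq, abs_of_pos h0]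
  have hfcont : Continuous (fun t => f (circleMap 0 s t)) :=
    hfc.continuousOn.comp_continuous (continuous_circleMap 0 s) hmemcb
  have hne_a : ∀ t : ℝ, circleMap 0 s t - a ≠ 0 := by
    intro t
    refine sub_ne_zero.2 fun h => ?_
    rw [← h, hcm t] at hs; exact lt_irrefl _ hs
  simp only [circleIntegral, deriv_circleMap, smul_eq_mul] at E1 E2
  set g1 : ℝ → ℂ := fun t => (circleMap 0 s t * Complex.I) * ((circleMap 0 s t - a)⁻¹ * f (circleMap 0 s t)) with hg1
  set g2 : ℝ → ℂ := fun t => (circleMap 0 s t * Complex.I) *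
    (((starRingEnd ℂ) a * (((s:ℂ)^2 - (starRingEnd ℂ) a * circleMap 0 s t)⁻¹)) * f (circleMap 0 s t)) with hg2
  have hg1c : Continuous g1 := by
    apply ((continuous_circleMap 0 s).mul continuous_const).mul
    exact (((continuous_circleMap 0 s).sub continuous_const).inv₀ hne_a).mul hfcont
  have hg2c : Continuous g2 := by
    apply ((continuous_circleMap 0 s).mul continuous_const).mul
    refine (continuous_const.mul ((continuous_const.sub
      (continuous_const.mul (continuous_circleMap 0 s))).inv₀ ?_)).mul hfcont
    intro t; exact hden2 _ (hmemcb t)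
  have hadd : (∫ t in (0:ℝ)..(2*Real.pi), (g1 t + g2 t)) = 2 * (Real.pi:ℂ) * Complex.I * f a := by
    rw [intervalIntegral.integral_add (hg1c.intervalIntegrable _ _) (hg2c.intervalIntegrable _ _),
      E1, E2, add_zero]
  have hpt : ∀ t : ℝ, g1 t + g2 t = Complex.I *
      ((((s^2 - (‖a‖)^2) / (‖circleMap 0 s t - a‖)^2 : ℝ) : ℂ) * f (circleMap 0 s t)) := by
    intro t
    have hk := kernel_identity (hcm t) hs
    calc g1 t + g2 t
        = ((circleMap 0 s t * Complex.I) * ((circleMap 0 s t - a)⁻¹ +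
            (starRingEnd ℂ) a * (((s:ℂ)^2 - (starRingEnd ℂ) a * circleMap 0 s t)⁻¹))) * f (circleMap 0 s t) := by
          rw [hg1, hg2]; ring
      _ = _ := by rw [hk]; ring
  rw [intervalIntegral.integral_congr (g := fun t => Complex.I *
      ((((s^2 - (‖a‖)^2) / (‖circleMap 0 s t - a‖)^2 : ℝ) : ℂ) * f (circleMap 0 s t)))
      (fun t _ => hpt t), intervalIntegral.integral_const_mul] at hadd
  have hI : 2 * (Real.pi:ℂ) * Complex.I * f a = Complex.I * ((2 * Real.pi : ℝ) • f a) := by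
    rw [Complex.real_smul]; push_cast; ring
  rw [hI] at hadd
  have := mul_left_cancel₀ Complex.I_ne_zero hadd.symm
  rw [this]
  apply intervalIntegral.integral_congr
  intro t _
  simp [Complex.real_smul]

lemma maxmod {θ : ℂ → ℂ} (hdiff : DifferentiableOn ℂ θ (ball (0:ℂ) 1))
    {M : ℝ} (hbound : ∀ z ∈ ball (0:ℂ) 1, ‖θ z‖ ≤ M)
    (hbv : ∀ᵐ t : ℝ ∂(volume.restrict (Ioc 0 (2*Real.pi))),
      Filter.Tendsto (fun r : ℝ => θ ((r:ℂ) * Complex.exp ((t:ℂ) * Complex.I)))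
        (nhdsWithin 1 (Iio 1)) (nhds (θ (Complex.exp ((t:ℂ) * Complex.I)))) ∧
        ‖θ (Complex.exp ((t:ℂ) * Complex.I))‖ = 1) :
    ∀ a ∈ ball (0:ℂ) 1, ‖θ a‖ ≤ 1 := by
  intro a ha
  have hcm1 : ∀ (s : ℝ) (t : ℝ), circleMap 0 s t = (s:ℂ) * Complex.exp ((t:ℂ) * Complex.I) := by
    intro s t; simp [circleMap]
  set A := ‖a‖ with hA
  have hA1 : A < 1 := by simpa [mem_ball, Complex.dist_eq] using ha
  have hA0 : 0 ≤ A := norm_nonneg a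
  set ρ : ℝ := (1 + A)/2 with hρ
  have hAρ : A < ρ := by rw [hρ]; linarith
  have hρ1 : ρ < 1 := by rw [hρ]; linarith
  have hρ0 : 0 < ρ := by rw [hρ]; linarith
  set r : ℕ → ℝ := fun n => 1 - (1 - ρ) * (1/(n+1)) with hr
  have hrρ : ∀ n, ρ ≤ r n := by
    intro n
    have h1 : (0:ℝ) < (n:ℝ) + 1 := by positivity
    have : (1 - ρ) * (1/(n+1)) ≤ (1 - ρ) * 1 := by
      apply mul_le_mul_of_nonneg_left _ (by linarith)
      rw [div_le_one h1]; linarith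
    simp only [hr]; linarith
  have hr1 : ∀ n, r n < 1 := by
    intro n
    have h1 : (0:ℝ) < (n:ℝ) + 1 := by positivity
    have hρ' : (0:ℝ) < 1 - ρ := by linarith
    have : 0 < (1 - ρ) * (1/((n:ℝ)+1)) := by positivity
    simp only [hr]; linarith
  have hrA : ∀ n, A < r n := fun n => hAρ.trans_le (hrρ n)
  have hrtend : Filter.Tendsto r Filter.atTop (nhds 1) := by
    have h0 : Filter.Tendsto (fun n : ℕ => 1/((n:ℝ)+1)) Filter.atTop (nhds 0) :=
      tendsto_one_div_add_atTop_nhds_zero_nat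
    have := (tendsto_const_nhds (x := (1:ℝ))).sub ((tendsto_const_nhds (x := 1 - ρ)).mul h0)
    rw [hr]; simpa using this
  -- Poisson kernel
  set P : ℝ → ℝ → ℝ := fun s t => (s^2 - A^2) / (‖(s:ℂ) * Complex.exp ((t:ℂ) * Complex.I) - a‖)^2 with hP
  -- lower bound for denominators
  have hdenlb : ∀ (s t : ℝ), A < s → s - A ≤ ‖(s:ℂ) * Complex.exp ((t:ℂ) * Complex.I) - a‖ := by
    intro s t hs
    have h1 : ‖(s:ℂ) * Complex.exp ((t:ℂ) * Complex.I)‖ = s := by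
      rw [norm_mul, Complex.norm_real, Complex.norm_exp_ofReal_mul_I, mul_one, Real.norm_eq_abs,
        abs_of_pos (hA0.trans_lt hs)]
    calc s - A = ‖(s:ℂ) * Complex.exp ((t:ℂ) * Complex.I)‖ - ‖a‖ := by rw [h1]
      _ ≤ _ := by
          have := norm_sub_norm_le ((s:ℂ) * Complex.exp ((t:ℂ) * Complex.I)) a
          simpa using this
  have hPnonneg : ∀ (s t : ℝ), A < s → 0 ≤ P s t := by
    intro s t hs
    apply div_nonneg
    · nlinarith
    · positivity
  have hPle : ∀ (s t : ℝ), A < s → s ≤ 1 → ρ ≤ s → P s t ≤ 1 / (ρ - A)^2 := by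
    intro s t hs hs1 hρs
    have hlb := hdenlb s t hs
    have h2 : (0:ℝ) < ρ - A := by linarith
    have h3 : ρ - A ≤ ‖(s:ℂ) * Complex.exp ((t:ℂ) * Complex.I) - a‖ := by linarith
    have h4 : (ρ - A)^2 ≤ (‖(s:ℂ) * Complex.exp ((t:ℂ) * Complex.I) - a‖)^2 := by
      nlinarith
    rw [hP, div_le_div_iff₀
      (by nlinarith : (0:ℝ) < (‖(s:ℂ) * Complex.exp ((t:ℂ) * Complex.I) - a‖)^2)
      (by nlinarith : (0:ℝ) < (ρ - A)^2)]
    have h5 : s^2 - A^2 ≤ 1 := by nlinarith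
    have h6 := mul_le_mul h5 h4 (sq_nonneg _) (by norm_num : (0:ℝ) ≤ 1)
    linarith
  have M0 : 0 ≤ M := (norm_nonneg _).trans (hbound 0 (by simp [mem_ball]))
  have hmemD : ∀ (s t : ℝ), 0 ≤ s → s < 1 → (s:ℂ) * Complex.exp ((t:ℂ) * Complex.I) ∈ ball (0:ℂ) 1 := by
    intro s t hs0 hs1
    simp only [mem_ball, Complex.dist_eq, sub_zero, norm_mul, Complex.norm_real, Real.norm_eq_abs,
      Complex.norm_exp_ofReal_mul_I, mul_one]
    rwa [_root_.abs_of_nonneg hs0]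
  -- Poisson representation for θ and for the constant 1
  have hEθ : ∀ n : ℕ, (2 * Real.pi : ℝ) • θ a =
      ∫ t in (0:ℝ)..(2*Real.pi), P (r n) t • θ ((r n : ℂ) * Complex.exp ((t:ℂ) * Complex.I)) := by
    intro n
    have h := poisson_rep hdiff (hrA n) (hr1 n)
    rw [h]
    apply intervalIntegral.integral_congr
    intro t _
    simp only [hP, hcm1, hA]
  have hE1 : ∀ n : ℕ, (∫ t in (0:ℝ)..(2*Real.pi), P (r n) t) = 2 * Real.pi := by
    intro n
    have h := poisson_rep (f := fun _ => (1:ℂ)) (differentiableOn_const 1) (hrA n) (hr1 n)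
    simp only [hcm1] at h
    have h2 : ((2 * Real.pi : ℝ) : ℂ) = ∫ t in (0:ℝ)..(2*Real.pi), ((P (r n) t : ℝ) : ℂ) := by
      rw [intervalIntegral.integral_congr (g := fun t : ℝ =>
        ((((r n)^2 - A^2) / (‖(r n : ℂ) * Complex.exp ((t:ℂ) * Complex.I) - a‖)^2 : ℝ) : ℂ))
        (fun t _ => by simp only [hP])]
      simpa [Complex.real_smul] using h
    rw [intervalIntegral.integral_ofReal] at h2
    exact_mod_cast h2.symm
  -- the norm inequality for each n
  have hnorm : ∀ n : ℕ, 2 * Real.pi * ‖θ a‖ ≤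
      ∫ t in (0:ℝ)..(2*Real.pi), P (r n) t * ‖θ ((r n : ℂ) * Complex.exp ((t:ℂ) * Complex.I))‖ := by
    intro n
    have h1 : ‖(2 * Real.pi : ℝ) • θ a‖ = 2 * Real.pi * ‖θ a‖ := by
      rw [norm_smul, Real.norm_eq_abs, abs_of_pos Real.two_pi_pos]
    rw [← h1, hEθ n]
    refine (intervalIntegral.norm_integral_le_integral_norm Real.two_pi_pos.le).trans_eq ?_
    apply intervalIntegral.integral_congr
    intro t _
    simp only [norm_smul, Real.norm_eq_abs]
    rw [_root_.abs_of_nonneg (hPnonneg _ t (hrA n))]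
  -- dominated convergence
  haveI hfin : IsFiniteMeasure (volume.restrict (Ioc (0:ℝ) (2*Real.pi))) :=
    ⟨by rw [Measure.restrict_apply_univ]; simp [Real.volume_Ioc]; exact ENNReal.mul_lt_top (by simp) ENNReal.ofReal_lt_top⟩
  have hcont_circ : ∀ s : ℝ, Continuous (fun t : ℝ => (s:ℂ) * Complex.exp ((t:ℂ) * Complex.I)) := by
    intro s
    exact continuous_const.mul (Complex.continuous_exp.comp (Complex.continuous_ofReal.mul continuous_const))
  have hcont_θ : ∀ s : ℝ, 0 ≤ s → s < 1 → Continuous (fun t : ℝ => θ ((s:ℂ) * Complex.exp ((t:ℂ) * Complex.I))) := by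
    intro s hs0 hs1
    exact hdiff.continuousOn.comp_continuous (hcont_circ s) (fun t => hmemD s t hs0 hs1)
  have hcont_P : ∀ s : ℝ, A < s → Continuous (fun t : ℝ => P s t) := by
    intro s hs
    rw [hP]
    apply continuous_const.div
    · exact (continuous_norm.comp ((hcont_circ s).sub continuous_const)).pow 2
    · intro t
      have h := hdenlb s t hs
      have h2 : 0 < ‖(s:ℂ) * Complex.exp ((t:ℂ) * Complex.I) - a‖ := by linarith
      exact pow_ne_zero 2 (ne_of_gt h2)
  have hden1 : ∀ t : ℝ, 1 - A ≤ ‖((1:ℝ):ℂ) * Complex.exp ((t:ℂ) * Complex.I) - a‖ :=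
    fun t => hdenlb 1 t hA1
  have hPt : ∀ t : ℝ, Filter.Tendsto (fun n => P (r n) t) Filter.atTop (nhds (P 1 t)) := by
    intro t
    have hnum : Filter.Tendsto (fun n => (r n)^2 - A^2) Filter.atTop (nhds ((1:ℝ)^2 - A^2)) :=
      (hrtend.pow 2).sub tendsto_const_nhds
    have hc : Continuous (fun s : ℝ => (‖(s:ℂ) * Complex.exp ((t:ℂ) * Complex.I) - a‖)^2) :=
      (continuous_norm.comp ((Complex.continuous_ofReal.mul continuous_const).sub
        continuous_const)).pow 2
    have hden : Filter.Tendsto (fun n => (‖((r n : ℝ):ℂ) * Complex.exp ((t:ℂ) * Complex.I) - a‖)^2)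
        Filter.atTop (nhds ((‖((1:ℝ):ℂ) * Complex.exp ((t:ℂ) * Complex.I) - a‖)^2)) :=
      (hc.tendsto 1).comp hrtend
    have hne : (‖((1:ℝ):ℂ) * Complex.exp ((t:ℂ) * Complex.I) - a‖)^2 ≠ 0 := by
      have := hden1 t
      have h2 : 0 < ‖((1:ℝ):ℂ) * Complex.exp ((t:ℂ) * Complex.I) - a‖ := by linarith
      exact pow_ne_zero 2 (ne_of_gt h2)
    have := hnum.div hden hne
    simpa only [hP, one_pow, Pi.div_def] using this
  set μ := volume.restrict (Ioc (0:ℝ) (2*Real.pi)) with hμ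
  set F : ℕ → ℝ → ℝ := fun n t => P (r n) t * ‖θ ((r n : ℂ) * Complex.exp ((t:ℂ) * Complex.I))‖ with hF
  have hr0 : ∀ n, (0:ℝ) ≤ r n := fun n => (hρ0.trans_le (hrρ n)).le
  have hFmeas : ∀ n, AEStronglyMeasurable (F n) μ :=
    fun n => ((hcont_P (r n) (hrA n)).mul (hcont_θ (r n) (hr0 n) (hr1 n)).norm).aestronglyMeasurable
  have hFbound : ∀ n, ∀ᵐ t ∂μ, ‖F n t‖ ≤ (1/(ρ-A)^2) * M := by
    intro n
    refine Filter.Eventually.of_forall fun t => ?_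
    have h1 : 0 ≤ F n t := mul_nonneg (hPnonneg _ t (hrA n)) (norm_nonneg _)
    rw [Real.norm_eq_abs, _root_.abs_of_nonneg h1]
    exact mul_le_mul (hPle _ t (hrA n) (hr1 n).le (hrρ n))
      (hbound _ (hmemD _ t (hr0 n) (hr1 n))) (norm_nonneg _) (by positivity)
  have hFlim : ∀ᵐ t ∂μ, Filter.Tendsto (fun n => F n t) Filter.atTop (nhds (P 1 t)) := by
    refine hbv.mono fun t ht => ?_
    have hrin : Filter.Tendsto r Filter.atTop (nhdsWithin 1 (Iio 1)) := by
      rw [tendsto_nhdsWithin_iff]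
      exact ⟨hrtend, Filter.Eventually.of_forall hr1⟩
    have h2 := (ht.1.comp hrin).norm
    rw [ht.2] at h2
    have h3 := (hPt t).mul h2
    simpa using h3
  have hDCT := tendsto_integral_of_dominated_convergence _ hFmeas (integrable_const _) hFbound hFlim
  have hGmeas : ∀ n : ℕ, AEStronglyMeasurable (fun t => P (r n) t) μ :=
    fun n => (hcont_P (r n) (hrA n)).aestronglyMeasurable
  have hGbound : ∀ n : ℕ, ∀ᵐ t ∂μ, ‖P (r n) t‖ ≤ (1/(ρ-A)^2) := by
    intro n
    refine Filter.Eventually.of_forall fun t => ?_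
    rw [Real.norm_eq_abs, _root_.abs_of_nonneg (hPnonneg _ t (hrA n))]
    exact hPle _ t (hrA n) (hr1 n).le (hrρ n)
  have hDCT2 := tendsto_integral_of_dominated_convergence _ hGmeas (integrable_const _) hGbound
    (Filter.Eventually.of_forall hPt)
  have hset : ∀ n, (∫ t, F n t ∂μ) = ∫ t in (0:ℝ)..(2*Real.pi), F n t := by
    intro n; rw [intervalIntegral.integral_of_le Real.two_pi_pos.le]
  have hset2 : ∀ n, (∫ t, P (r n) t ∂μ) = ∫ t in (0:ℝ)..(2*Real.pi), P (r n) t := by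
    intro n; rw [intervalIntegral.integral_of_le Real.two_pi_pos.le]
  have hconst : (fun n : ℕ => ∫ t, P (r n) t ∂μ) = fun _ => 2 * Real.pi :=
    funext fun n => (hset2 n).trans (hE1 n)
  have hL : (∫ t, P 1 t ∂μ) = 2 * Real.pi :=
    tendsto_nhds_unique (hconst ▸ hDCT2) tendsto_const_nhds
  have hfinal : 2 * Real.pi * ‖θ a‖ ≤ ∫ t, P 1 t ∂μ := by
    refine ge_of_tendsto' hDCT fun n => ?_
    rw [hset n]
    exact hnorm n
  rw [hL] at hfinal
  nlinarith [Real.two_pi_pos]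

/-- An inner function is bounded by 1 on the disk. -/
lemma isInner_norm_le_one {θ : ℂ → ℂ} (hθ : IsInner θ) : ∀ z ∈ unitDisk, ‖θ z‖ ≤ 1 := by
  obtain ⟨⟨hdiff, hfin, hbv⟩, hmod⟩ := hθ
  rw [hNorm, if_pos rfl] at hfin
  set S := ⨆ z : unitDisk, (‖θ (z : ℂ)‖₊ : ℝ≥0∞) with hS
  have hM : ∀ z ∈ unitDisk, ‖θ z‖ ≤ S.toReal := by
    intro z hz
    have h1 : (‖θ z‖₊ : ℝ≥0∞) ≤ S := le_iSup (fun w : unitDisk => (‖θ (w : ℂ)‖₊ : ℝ≥0∞)) ⟨z, hz⟩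
    have h2 := ENNReal.toReal_mono hfin.ne h1
    simpa using h2
  have hae := ae_circle_param (hbv.and hmod)
  exact maxmod hdiff hM hae

/-- Monotonicity of the Hardy norm under a pointwise bound on the disk. -/
lemma hNorm_le_mul {f g : ℂ → ℂ} (C : ℝ≥0) (hC : ∀ z ∈ unitDisk, ‖f z‖ ≤ (C : ℝ) * ‖g z‖)
    {p : ℝ≥0∞} (hp : 1 ≤ p) : hNorm p f ≤ C * hNorm p g := by
  have hC' : ∀ z ∈ unitDisk, (‖f z‖₊ : ℝ≥0∞) ≤ (C : ℝ≥0∞) * (‖g z‖₊ : ℝ≥0∞) := by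
    intro z hz
    rw [← ENNReal.coe_mul, ENNReal.coe_le_coe, ← NNReal.coe_le_coe]
    push_cast
    simpa using hC z hz
  by_cases hptop : p = ⊤
  · subst hptop
    rw [hNorm, if_pos rfl, hNorm, if_pos rfl]
    refine iSup_le fun z => ?_
    exact (hC' z z.2).trans (mul_le_mul_right (le_iSup
      (fun w : unitDisk => (‖g (w : ℂ)‖₊ : ℝ≥0∞)) z) _)
  · have hp0 : p ≠ 0 := fun h => by rw [h] at hp; simp at hp
    have hpt : 0 < p.toReal := ENNReal.toReal_pos hp0 hptop
    rw [hNorm, if_neg hptop, hNorm, if_neg hptop]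
    refine iSup_le fun r => ?_
    refine le_trans ?_ (mul_le_mul_right (le_iSup (fun r' : Ioo (0:ℝ) 1 =>
      (∫⁻ ζ, (‖g ((((r' : ℝ) : ℂ)) * ζ)‖₊ : ℝ≥0∞) ^ p.toReal ∂circleMeasure) ^ (1 / p.toReal)) r) _)
    have hmem : ∀ᵐ ζ ∂circleMeasure, (((r : ℝ) : ℂ)) * ζ ∈ unitDisk := by
      refine ae_circle_norm_one.mono fun ζ hζ => ?_
      simp only [unitDisk, mem_ball, Complex.dist_eq, sub_zero]
      rw [norm_mul, Complex.norm_real, hζ, mul_one,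
        Real.norm_eq_abs, _root_.abs_of_pos r.2.1]
      exact r.2.2
    have hmono : (∫⁻ ζ, (‖f ((((r : ℝ) : ℂ)) * ζ)‖₊ : ℝ≥0∞) ^ p.toReal ∂circleMeasure) ≤
        ∫⁻ ζ, ((C : ℝ≥0∞) * (‖g ((((r : ℝ) : ℂ)) * ζ)‖₊ : ℝ≥0∞)) ^ p.toReal ∂circleMeasure := by
      refine lintegral_mono_ae (hmem.mono fun ζ hζ => ?_)
      exact ENNReal.rpow_le_rpow (hC' _ hζ) hpt.le
    refine (ENNReal.rpow_le_rpow hmono (by positivity)).trans ?_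
    have heq : (∫⁻ ζ, ((C : ℝ≥0∞) * (‖g ((((r : ℝ) : ℂ)) * ζ)‖₊ : ℝ≥0∞)) ^ p.toReal ∂circleMeasure)
        = (C : ℝ≥0∞) ^ p.toReal *
          ∫⁻ ζ, (‖g ((((r : ℝ) : ℂ)) * ζ)‖₊ : ℝ≥0∞) ^ p.toReal ∂circleMeasure := by
      rw [← lintegral_const_mul' _ _ (ENNReal.rpow_ne_top_of_nonneg hpt.le ENNReal.coe_ne_top)]
      congr 1
      funext ζ
      rw [ENNReal.mul_rpow_of_nonneg _ _ hpt.le]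
    rw [heq, ENNReal.mul_rpow_of_nonneg _ _ (by positivity : (0:ℝ) ≤ 1 / p.toReal),
      ← ENNReal.rpow_mul, mul_one_div, div_self hpt.ne', ENNReal.rpow_one]

/-- Multiplying by `1 - conj w * θ` preserves `H^p`. -/
lemma memHp_mul {θ : ℂ → ℂ} (hθ : IsInner θ) {w : ℂ} (hw : w ∈ unitDisk) {p : ℝ≥0∞}
    (hp : 1 ≤ p) {u : ℂ → ℂ} (hu : MemHp p u) :
    MemHp p (fun z => (1 - (starRingEnd ℂ) w * θ z) * u z) := by
  obtain ⟨hud, hufin, hubv⟩ := hu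
  have hθd := hθ.1.1
  have hθle := isInner_norm_le_one hθ
  have hw1 : ‖w‖ < 1 := by simpa [unitDisk, mem_ball, Complex.dist_eq] using hw
  refine ⟨?_, ?_, ?_⟩
  · exact ((differentiableOn_const _).sub ((differentiableOn_const _).mul hθd)).mul hud
  · have hb : ∀ z ∈ unitDisk, ‖(1 - (starRingEnd ℂ) w * θ z) * u z‖ ≤ ((2:ℝ≥0) : ℝ) * ‖u z‖ := by
      intro z hz
      rw [norm_mul]
      have := den_ub (w := w) (hθle z hz)
      have h2 : ‖1 - (starRingEnd ℂ) w * θ z‖ ≤ 2 := by linarith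
      push_cast
      exact mul_le_mul_of_nonneg_right h2 (norm_nonneg _)
    calc hNorm p _ ≤ (2 : ℝ≥0) * hNorm p u := hNorm_le_mul 2 hb hp
      _ < ⊤ := ENNReal.mul_lt_top ENNReal.coe_lt_top hufin
  · filter_upwards [hθ.1.2.2, hubv] with ζ hθζ huζ
    exact (tendsto_const_nhds.sub (tendsto_const_nhds.mul hθζ)).mul huζ

/-- Dividing by `1 - conj w * θ` preserves `H^p`. -/
lemma memHp_div {θ : ℂ → ℂ} (hθ : IsInner θ) {w : ℂ} (hw : w ∈ unitDisk) {p : ℝ≥0∞}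
    (hp : 1 ≤ p) {u : ℂ → ℂ} (hu : MemHp p u) :
    MemHp p (fun z => u z / (1 - (starRingEnd ℂ) w * θ z)) := by
  obtain ⟨hud, hufin, hubv⟩ := hu
  have hθd := hθ.1.1
  have hθle := isInner_norm_le_one hθ
  have hw1 : ‖w‖ < 1 := by simpa [unitDisk, mem_ball, Complex.dist_eq] using hw
  have hwpos : 0 < 1 - ‖w‖ := by linarith
  refine ⟨?_, ?_, ?_⟩
  · exact hud.div ((differentiableOn_const _).sub ((differentiableOn_const _).mul hθd))
      (fun z hz => den_ne hw1 (hθle z hz))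
  · set C : ℝ≥0 := (1 - ‖w‖)⁻¹.toNNReal with hCdef
    have hb : ∀ z ∈ unitDisk, ‖u z / (1 - (starRingEnd ℂ) w * θ z)‖ ≤ (C : ℝ) * ‖u z‖ := by
      intro z hz
      rw [norm_div]
      have hlb := den_lb (w := w) (hθle z hz)
      have hC : (C : ℝ) = (1 - ‖w‖)⁻¹ := Real.coe_toNNReal _ (by positivity)
      rw [hC, div_eq_mul_inv, mul_comm]
      apply mul_le_mul_of_nonneg_right _ (norm_nonneg _)
      apply inv_anti₀ hwpos hlb
    calc hNorm p _ ≤ C * hNorm p u := hNorm_le_mul C hb hp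
      _ < ⊤ := ENNReal.mul_lt_top ENNReal.coe_lt_top hufin
  · filter_upwards [hθ.1.2.2, hubv, hθ.2] with ζ hθζ huζ hζ1
    exact huζ.div (tendsto_const_nhds.sub (tendsto_const_nhds.mul hθζ))
      (den_ne hw1 hζ1.le)

lemma aux_cancel {B c d x : ℂ} (hc : c ≠ 0) : B / c * (c / d * x) = B * (x / d) := by
  have h1 : c⁻¹ * c = 1 := inv_mul_cancel₀ hc
  calc B / c * (c / d * x) = B * (c⁻¹ * c) * (x * d⁻¹) := by
        rw [div_eq_mul_inv, div_eq_mul_inv]; ring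
    _ = B * (x / d) := by rw [h1, mul_one, ← div_eq_mul_inv]

lemma isInner_frostman {θ : ℂ → ℂ} (hθ : IsInner θ) {w : ℂ} (hw : w ∈ unitDisk) :
    IsInner (fun z => (θ z - w) / (1 - (starRingEnd ℂ) w * θ z)) := by
  have hθd := hθ.1.1
  have hθle := isInner_norm_le_one hθ
  have hw1 : ‖w‖ < 1 := by simpa [unitDisk, mem_ball, Complex.dist_eq] using hw
  have hwpos : 0 < 1 - ‖w‖ := by linarith
  constructor
  · refine ⟨?_, ?_, ?_⟩
    · exact (hθd.sub (differentiableOn_const _)).div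
        ((differentiableOn_const _).sub ((differentiableOn_const _).mul hθd))
        (fun z hz => den_ne hw1 (hθle z hz))
    · rw [hNorm, if_pos rfl]
      set C : ℝ≥0 := (2 / (1 - ‖w‖)).toNNReal with hC
      refine lt_of_le_of_lt (iSup_le fun z => ?_) (ENNReal.coe_lt_top (r := C))
      rw [ENNReal.coe_le_coe, ← NNReal.coe_le_coe, coe_nnnorm,
        Real.coe_toNNReal _ (by positivity)]
      rw [norm_div]
      have h1 : ‖θ (z:ℂ) - w‖ ≤ 2 := (norm_sub_le _ _).trans (by linarith [hθle (z:ℂ) z.2])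
      have h2 := den_lb (w := w) (hθle (z:ℂ) z.2)
      exact div_le_div₀ (by norm_num) h1 hwpos h2
    · filter_upwards [hθ.1.2.2, hθ.2] with ζ hθζ h1
      exact (hθζ.sub tendsto_const_nhds).div
        (tendsto_const_nhds.sub (tendsto_const_nhds.mul hθζ)) (den_ne hw1 h1.le)
  · filter_upwards [hθ.2] with ζ h1
    have hxx := mul_conj_one_of_norm_one h1
    have hd := den_ne hw1 h1.le
    have hkey : ‖θ ζ - w‖ = ‖1 - (starRingEnd ℂ) w * θ ζ‖ := by
      have h2 := congrArg norm (circle_id (w := w) hxx)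
      rw [norm_mul, RCLike.norm_conj, h1, mul_one] at h2
      exact h2.symm
    rw [norm_div, hkey, div_self (norm_ne_zero_iff.2 hd)]

/-- Frostman shifts: for `θ` nonconstant inner and `w ∈ D` (with `θ` not identically `w`,
so that the Frostman shift is nonconstant), `φ := (θ - w)/(1 - conj w · θ)` is inner and
`K^p_θ = (1 - conj w · θ)·K^p_φ` for every `1 ≤ p ≤ ∞`. -/
theorem frostman_shift (θ : ℂ → ℂ) (hθ : IsInner θ) (hnc : Nonconstant θ)
    (w : ℂ) (hw : w ∈ unitDisk) (hne : ¬ ∀ z ∈ unitDisk, θ z = w) :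
    IsInner (fun z => (θ z - w) / (1 - (starRingEnd ℂ) w * θ z)) ∧
    ∀ p : ℝ≥0∞, 1 ≤ p → ∀ f : ℂ → ℂ,
      MemKp p θ f ↔
        ∃ h : ℂ → ℂ,
          MemKp p (fun z => (θ z - w) / (1 - (starRingEnd ℂ) w * θ z)) h ∧
          (∀ z ∈ unitDisk, f z = (1 - (starRingEnd ℂ) w * θ z) * h z) ∧
          ∀ᵐ ζ ∂circleMeasure, f ζ = (1 - (starRingEnd ℂ) w * θ ζ) * h ζ := by
  have hθd := hθ.1.1
  have hθbv := hθ.1.2.2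
  have hmod := hθ.2
  have hθle := isInner_norm_le_one hθ
  have hw1 : ‖w‖ < 1 := by simpa [unitDisk, mem_ball, Complex.dist_eq] using hw
  have hwpos : 0 < 1 - ‖w‖ := by linarith
  refine ⟨isInner_frostman hθ hw, ?_⟩
  intro p hp f
  constructor
  · rintro ⟨hfH, g, hgH, hgeq⟩
    refine ⟨fun z => f z / (1 - (starRingEnd ℂ) w * θ z),
      ⟨memHp_div hθ hw hp hfH, ?_⟩, ?_, ?_⟩
    · refine ⟨fun z => g z / (1 - (starRingEnd ℂ) w * θ z), memHp_div hθ hw hp hgH, ?_⟩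
      filter_upwards [hmod, hgeq] with ζ h1 h2
      have hxx := mul_conj_one_of_norm_one h1
      have hd := den_ne hw1 h1.le
      have hdc : (starRingEnd ℂ) (1 - (starRingEnd ℂ) w * θ ζ) ≠ 0 := by
        rw [map_ne_zero]; exact hd
      have hkey := circle_id (w := w) hxx
      rw [h2, map_div₀, ← hkey]
      rw [mul_comm ((starRingEnd ℂ) (1 - (starRingEnd ℂ) w * θ ζ)) (θ ζ), mul_div_assoc,
        mul_div_assoc]
      rw [mul_comm (θ ζ) ((starRingEnd ℂ) (1 - (starRingEnd ℂ) w * θ ζ) / (1 - (starRingEnd ℂ) w * θ ζ)),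
        mul_assoc ((starRingEnd ℂ) ζ) ((starRingEnd ℂ) (f ζ) / (starRingEnd ℂ) (1 - (starRingEnd ℂ) w * θ ζ)),
        aux_cancel hdc, ← mul_assoc]
    · intro z hz
      have hd := den_ne hw1 (hθle z hz)
      field_simp
    · filter_upwards [hmod] with ζ h1
      have hd := den_ne hw1 h1.le
      field_simp
  · rintro ⟨h, ⟨⟨hhd, hhfin, hhbv⟩, g', hg'H, hg'eq⟩, hfD, hfae⟩
    have hhH : MemHp p h := ⟨hhd, hhfin, hhbv⟩
    constructor
    · refine ⟨?_, ?_, ?_⟩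
      · exact ((((differentiableOn_const _).sub
          ((differentiableOn_const _).mul hθd)).mul hhd)).congr hfD
      · have hb : ∀ z ∈ unitDisk, ‖f z‖ ≤ ((2:ℝ≥0) : ℝ) * ‖h z‖ := by
          intro z hz
          rw [hfD z hz, norm_mul]
          have := den_ub (w := w) (hθle z hz)
          push_cast
          nlinarith [norm_nonneg (h z), norm_nonneg (1 - (starRingEnd ℂ) w * θ z)]
        exact lt_of_le_of_lt (hNorm_le_mul 2 hb hp)
          (ENNReal.mul_lt_top ENNReal.coe_lt_top hhfin)
      · filter_upwards [hθbv, hhbv, hfae, ae_circle_norm_one] with ζ h1 h2 h3 h4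
        have hev : ∀ᶠ r : ℝ in nhdsWithin 1 (Iio 1),
            f ((r:ℂ) * ζ) = (1 - (starRingEnd ℂ) w * θ ((r:ℂ) * ζ)) * h ((r:ℂ) * ζ) := by
          have e1 : ∀ᶠ r : ℝ in nhdsWithin 1 (Iio 1), 0 < r :=
            (eventually_gt_nhds zero_lt_one).filter_mono nhdsWithin_le_nhds
          have e2 : ∀ᶠ r : ℝ in nhdsWithin 1 (Iio 1), r < 1 := eventually_mem_nhdsWithin
          filter_upwards [e1, e2] with r hr0 hr1
          apply hfD
          simp only [unitDisk, mem_ball, Complex.dist_eq, sub_zero]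
          rw [norm_mul, Complex.norm_real, h4, mul_one,
            Real.norm_eq_abs, _root_.abs_of_pos hr0]
          exact hr1
        have htend := ((tendsto_const_nhds (x := (1:ℂ))).sub ((tendsto_const_nhds (x := (starRingEnd ℂ) w)).mul h1)).mul h2
        rw [← h3] at htend
        exact htend.congr' (Filter.EventuallyEq.symm hev)
    · refine ⟨fun z => (1 - (starRingEnd ℂ) w * θ z) * g' z, memHp_mul hθ hw hp hg'H, ?_⟩
      filter_upwards [hg'eq, hfae, hmod] with ζ h1 h2 h3
      have hxx := mul_conj_one_of_norm_one h3
      have hd := den_ne hw1 h3.le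
      have hkey := circle_id (w := w) hxx
      rw [h1, h2, map_mul]
      calc (1 - (starRingEnd ℂ) w * θ ζ) *
            ((starRingEnd ℂ) ζ * (starRingEnd ℂ) (h ζ) *
              ((θ ζ - w) / (1 - (starRingEnd ℂ) w * θ ζ)))
          = (starRingEnd ℂ) ζ * (starRingEnd ℂ) (h ζ) * (θ ζ - w) := by
            field_simp
        _ = (starRingEnd ℂ) ζ *
              ((starRingEnd ℂ) (1 - (starRingEnd ℂ) w * θ ζ) * (starRingEnd ℂ) (h ζ)) * θ ζ := by
            rw [← hkey]; ring
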